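/- Let P be the bidirectional path on vertices v₁,…,v_n (n ≥ 2) in which all directed edges (v_i,v_{i+1}) and (v_{i+1},v_i), 1 ≤ i ≤ n−1, have equal positive weight, and let v be an endpoint of P. Then ept_rzf(P, v) = 2n − 3. -/

import Mathlib

open scoped ENNReal NNReal

namespace RZF

variable {V : Type*} [Fintype V] [DecidableEq V]

/-- Probability that the white vertex `x` turns blue in one round of weighted
randomized zero forcing with weights `w`, given the current blue set `B`
(`0` when the total incoming weight of `x` is `0`). -/
noncomputable def turnProb (w : V → V → ℝ≥0) (B : Finset V) (x : V) : ℝ≥0 :=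
  (∑ u ∈ B, w u x) / ∑ u, w u x

/-- One-round transition probability of the RZF Markov chain from blue set `B`
to blue set `C`: each white vertex independently turns blue with probability
`turnProb w B ·`, and blue vertices stay blue. -/
noncomputable def stepProb (w : V → V → ℝ≥0) (B C : Finset V) : ℝ≥0∞ :=
  if B ⊆ C then
    (∏ x ∈ C \ B, (turnProb w B x : ℝ≥0∞)) *
      ∏ x ∈ Cᶜ, (1 - (turnProb w B x : ℝ≥0∞))
  else 0

/-- Distribution of the blue set after `t` rounds, started from `S`. -/
noncomputable def state (w : V → V → ℝ≥0) (S : Finset V) : ℕ → Finset V → ℝ≥0∞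
  | 0 => fun C => if C = S then 1 else 0
  | t + 1 => fun C => ∑ B : Finset V, state w S t B * stepProb w B C

/-- Expected propagation time `∑ₜ P(Bₜ ≠ V(G))`; this equals `E[τ]` when the
all-blue state is reachable from `S`, and `∞` otherwise. -/
noncomputable def ept (w : V → V → ℝ≥0) (S : Finset V) : ℝ≥0∞ :=
  ∑' t : ℕ, ∑ C ∈ Finset.univ.filter (fun C : Finset V => C ≠ Finset.univ),
    state w S t C

/-- Minimum expected propagation time over singleton starting sets. -/
noncomputable def eptMin (w : V → V → ℝ≥0) : ℝ≥0∞ :=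
  ⨅ v : V, ept w {v}

/-- The weight function of an unweighted directed graph: weight `1` on each
edge and `0` otherwise, so that `turnProb` is the fraction of in-neighbors
that are blue. -/
def unweight (adj : V → V → Prop) [DecidableRel adj] : V → V → ℝ≥0 :=
  fun u v => if adj u v then 1 else 0

end RZF

/-- `reachIn adj t a b` : there is a directed path of length at most `t`
from `a` to `b` in the directed graph with adjacency relation `adj`. -/
def reachIn {V : Type*} (adj : V → V → Prop) : ℕ → V → V → Prop
  | 0, a, b => a = b
  | t + 1, a, b => reachIn adj t a b ∨ ∃ c, reachIn adj t a c ∧ adj c b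

namespace RZFPath

open RZF Finset

/-- The path weight function. -/
noncomputable def w (n : ℕ) (c : ℝ≥0) : Fin n → Fin n → ℝ≥0 :=
  fun u v : Fin n => if (u : ℕ) + 1 = (v : ℕ) ∨ (v : ℕ) + 1 = (u : ℕ) then c else 0

/-- The prefix `{v₀, …, v_{k-1}}`. -/
def pre (n k : ℕ) : Finset (Fin n) := Finset.univ.filter (fun i => (i : ℕ) < k)

variable {n : ℕ} {c : ℝ≥0}

lemma mem_pre {k : ℕ} {i : Fin n} : i ∈ pre n k ↔ (i : ℕ) < k := by simp [pre]

lemma pre_ne {j k : ℕ} (hjk : j < k) (hk : k ≤ n) : pre n j ≠ pre n k := by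
  intro h
  have hm : (⟨j, lt_of_lt_of_le hjk hk⟩ : Fin n) ∈ pre n k := mem_pre.2 hjk
  rw [← h] at hm
  exact absurd (mem_pre.1 hm) (lt_irrefl j)

lemma pre_univ : pre n n = Finset.univ := by
  ext i; simpa [mem_pre] using i.isLt

lemma pre_inj {j k : ℕ} (hj : j ≤ n) (hk : k ≤ n) (h : pre n j = pre n k) : j = k := by
  rcases lt_trichotomy j k with h' | h' | h'
  · exact absurd h (pre_ne h' hk)
  · exact h'
  · exact absurd h.symm (pre_ne h' hj)

/-! ### weight sums -/

lemma sum_w_split (S : Finset (Fin n)) (x : Fin n) :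
    ∑ u ∈ S, w n c u x =
      (∑ u ∈ S, if (u : ℕ) + 1 = (x : ℕ) then c else 0) +
        ∑ u ∈ S, if (x : ℕ) + 1 = (u : ℕ) then c else 0 := by
  rw [← Finset.sum_add_distrib]
  refine Finset.sum_congr rfl fun u _ => ?_
  by_cases h1 : (u : ℕ) + 1 = (x : ℕ)
  · have h2 : ¬((x : ℕ) + 1 = (u : ℕ)) := by omega
    simp [w, h1, h2]
  · by_cases h2 : (x : ℕ) + 1 = (u : ℕ) <;> simp [w, h1, h2]

lemma sum_ite_single {S : Finset (Fin n)} {P : Fin n → Prop} [DecidablePred P] {a : Fin n}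
    (hP : ∀ u : Fin n, P u ↔ u = a) (ha : a ∈ S) :
    (∑ u ∈ S, if P u then c else 0) = c := by
  rw [show (∑ u ∈ S, if P u then c else 0) = ∑ u ∈ S, if u = a then c else 0 from
      Finset.sum_congr rfl fun u _ => if_congr (hP u) rfl rfl,
    Finset.sum_ite_eq' S a (fun _ => c), if_pos ha]

lemma sum_ite_zero (S : Finset (Fin n)) (P : Fin n → Prop) [DecidablePred P]
    (h : ∀ u ∈ S, ¬ P u) : (∑ u ∈ S, if P u then c else 0) = 0 :=
  Finset.sum_eq_zero fun u hu => if_neg (h u hu)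

lemma sum_pre_w_far {k : ℕ} {x : Fin n} (hx : k < (x : ℕ)) :
    ∑ u ∈ pre n k, w n c u x = 0 := by
  rw [sum_w_split,
    sum_ite_zero _ _ (fun u hu => by have := mem_pre.1 hu; omega),
    sum_ite_zero _ _ (fun u hu => by have := mem_pre.1 hu; omega), add_zero]

lemma sum_pre_w_front {k : ℕ} (hk : 1 ≤ k) {x : Fin n} (hx : (x : ℕ) = k) :
    ∑ u ∈ pre n k, w n c u x = c := by
  have hkn : k - 1 < n := by have := x.isLt; omega
  rw [sum_w_split,
    sum_ite_single (a := (⟨k - 1, hkn⟩ : Fin n))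
      (fun u => by simp only [Fin.ext_iff]; omega) (mem_pre.2 (by simp; omega)),
    sum_ite_zero _ _ (fun u hu => by have := mem_pre.1 hu; omega), add_zero]

lemma sum_univ_w_left (hn : 2 ≤ n) {x : Fin n} (hx : (x : ℕ) = 0) :
    ∑ u, w n c u x = c := by
  rw [sum_w_split,
    sum_ite_zero _ _ (fun u _ => by omega),
    sum_ite_single (a := (⟨1, by omega⟩ : Fin n))
      (fun u => by simp only [Fin.ext_iff]; omega) (mem_univ _), zero_add]

lemma sum_univ_w_right (hn : 2 ≤ n) {x : Fin n} (hx : (x : ℕ) = n - 1) :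
    ∑ u, w n c u x = c := by
  rw [sum_w_split,
    sum_ite_single (a := (⟨n - 2, by omega⟩ : Fin n))
      (fun u => by simp only [Fin.ext_iff]; omega) (mem_univ _),
    sum_ite_zero _ _ (fun u _ => by have := u.isLt; omega), add_zero]

lemma sum_univ_w_mid {x : Fin n} (h1 : 0 < (x : ℕ)) (h2 : (x : ℕ) < n - 1) :
    ∑ u, w n c u x = c + c := by
  rw [sum_w_split,
    sum_ite_single (a := (⟨(x : ℕ) - 1, by omega⟩ : Fin n))
      (fun u => by simp only [Fin.ext_iff]; omega) (mem_univ _),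
    sum_ite_single (a := (⟨(x : ℕ) + 1, by omega⟩ : Fin n))
      (fun u => by simp only [Fin.ext_iff]; omega) (mem_univ _)]

/-! ### turn probabilities -/

lemma tp_far {k : ℕ} {x : Fin n} (hx : k < (x : ℕ)) :
    turnProb (w n c) (pre n k) x = 0 := by
  unfold turnProb
  rw [sum_pre_w_far hx, zero_div]

lemma tp_mid (hc : c ≠ 0) {k : ℕ} (h1 : 1 ≤ k) (h2 : k ≤ n - 2) {x : Fin n}
    (hx : (x : ℕ) = k) : turnProb (w n c) (pre n k) x = 2⁻¹ := by
  have hn3 : 3 ≤ n := by omega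
  unfold turnProb
  rw [sum_pre_w_front h1 hx, sum_univ_w_mid (by omega) (by omega), ← two_mul,
    mul_comm, div_mul_eq_div_div, div_self hc, one_div]

lemma tp_last (hc : c ≠ 0) (hn : 2 ≤ n) {x : Fin n} (hx : (x : ℕ) = n - 1) :
    turnProb (w n c) (pre n (n - 1)) x = 1 := by
  unfold turnProb
  rw [sum_pre_w_front (by omega) hx, sum_univ_w_right hn hx, div_self hc]

/-! ### one-step transitions -/

lemma step_self {k : ℕ} (hk1 : 1 ≤ k) (hk2 : k ≤ n - 1) (hn : 2 ≤ n) :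
    stepProb (w n c) (pre n k) (pre n k) =
      1 - (turnProb (w n c) (pre n k) ⟨k, by omega⟩ : ℝ≥0∞) := by
  unfold stepProb
  rw [if_pos (subset_refl _), Finset.sdiff_self, Finset.prod_empty, one_mul]
  refine Finset.prod_eq_single_of_mem (⟨k, by omega⟩ : Fin n) ?_ ?_
  · simp [mem_pre]
  · intro b hb hbk
    have h1 : ¬((b : ℕ) < k) := by simpa [mem_pre] using (Finset.mem_compl.1 hb)
    have h2 : (b : ℕ) ≠ k := fun h => hbk (Fin.ext (by simpa using h))
    rw [tp_far (x := b) (by omega)]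
    simp

lemma step_next {k : ℕ} (hk1 : 1 ≤ k) (hk2 : k ≤ n - 1) (hn : 2 ≤ n) :
    stepProb (w n c) (pre n k) (pre n (k + 1)) =
      (turnProb (w n c) (pre n k) ⟨k, by omega⟩ : ℝ≥0∞) := by
  unfold stepProb
  have hsub : pre n k ⊆ pre n (k + 1) := fun i hi => mem_pre.2 (by
    have := mem_pre.1 hi; omega)
  rw [if_pos hsub]
  have h1 : pre n (k + 1) \ pre n k = {(⟨k, by omega⟩ : Fin n)} := by
    ext i
    simp only [Finset.mem_sdiff, mem_pre, Finset.mem_singleton, Fin.ext_iff]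
    omega
  rw [h1, Finset.prod_singleton]
  have h2 : ∏ x ∈ (pre n (k + 1))ᶜ, (1 - (turnProb (w n c) (pre n k) x : ℝ≥0∞)) = 1 :=
    Finset.prod_eq_one fun x hx => by
      have : ¬((x : ℕ) < k + 1) := by simpa [mem_pre] using (Finset.mem_compl.1 hx)
      rw [tp_far (x := x) (by omega)]
      simp
  rw [h2, mul_one]

lemma step_off {k : ℕ} (hk1 : 1 ≤ k) (hk2 : k ≤ n - 1) (hn : 2 ≤ n) {C : Finset (Fin n)}
    (h1 : C ≠ pre n k) (h2 : C ≠ pre n (k + 1)) :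
    stepProb (w n c) (pre n k) C = 0 := by
  unfold stepProb
  split_ifs with hsub
  · by_cases hex : ∃ x ∈ C \ pre n k, k < (x : ℕ)
    · obtain ⟨x, hxmem, hxk⟩ := hex
      rw [Finset.prod_eq_zero hxmem (by rw [tp_far hxk]; exact ENNReal.coe_zero), zero_mul]
    · exfalso
      push_neg at hex
      by_cases hempty : C \ pre n k = ∅
      · exact h1 (Finset.Subset.antisymm (Finset.sdiff_eq_empty_iff_subset.1 hempty) hsub)
      · refine h2 (Finset.Subset.antisymm ?_ ?_)
        · intro y hy
          by_cases hyk : y ∈ pre n k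
          · exact mem_pre.2 (by have := mem_pre.1 hyk; omega)
          · have hmem : y ∈ C \ pre n k := Finset.mem_sdiff.2 ⟨hy, hyk⟩
            exact mem_pre.2 (by have := hex y hmem; omega)
        · intro i hi
          obtain ⟨x, hx⟩ := Finset.nonempty_of_ne_empty hempty
          have hxC : x ∈ C := (Finset.mem_sdiff.1 hx).1
          have hxk : ¬((x : ℕ) < k) := fun h => (Finset.mem_sdiff.1 hx).2 (mem_pre.2 h)
          have hxle : (x : ℕ) ≤ k := hex x hx
          have hik : (i : ℕ) < k + 1 := mem_pre.1 hi
          by_cases hik' : (i : ℕ) < k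
          · exact hsub (mem_pre.2 hik')
          · have : i = x := Fin.ext (by omega)
            rw [this]; exact hxC
  · rfl

lemma step_univ_eval (C : Finset (Fin n)) :
    stepProb (w n c) Finset.univ C = if C = Finset.univ then 1 else 0 := by
  unfold stepProb
  by_cases h : C = Finset.univ
  · subst h
    rw [if_pos (subset_refl _), if_pos rfl, Finset.sdiff_self, Finset.prod_empty,
      Finset.compl_univ, Finset.prod_empty, one_mul]
  · rw [if_neg h, if_neg (fun hsub => h (Finset.univ_subset_iff.1 hsub))]

/-! ### the state distribution -/

/-- `A n c t k` : probability that the blue set at time `t` is the prefix of size `k`,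
starting from the left endpoint. -/
noncomputable def A (n : ℕ) (c : ℝ≥0) (t k : ℕ) : ℝ≥0∞ :=
  state (w n c) (pre n 1) t (pre n k)

lemma st_support (hn : 2 ≤ n) : ∀ t (C : Finset (Fin n)),
    state (w n c) (pre n 1) t C ≠ 0 → ∃ k, 1 ≤ k ∧ k ≤ n ∧ C = pre n k := by
  intro t
  induction t with
  | zero =>
    intro C h
    by_cases hC : C = pre n 1
    · exact ⟨1, le_refl 1, by omega, hC⟩
    · simp only [state, if_neg hC] at h
      exact absurd rfl h
  | succ t ih =>
    intro C h
    simp only [state] at h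
    obtain ⟨B, -, hB⟩ := Finset.exists_ne_zero_of_sum_ne_zero h
    rcases mul_ne_zero_iff.1 hB with ⟨hst, hstep⟩
    obtain ⟨j, hj1, hjn, rfl⟩ := ih B hst
    by_cases hjtop : j = n
    · rw [hjtop, pre_univ, step_univ_eval] at hstep
      by_cases hC : C = Finset.univ
      · exact ⟨n, by omega, le_refl n, by rw [hC, pre_univ]⟩
      · rw [if_neg hC] at hstep; exact absurd rfl hstep
    · have hj2 : j ≤ n - 1 := by omega
      by_cases hc1 : C = pre n j
      · exact ⟨j, hj1, hjn, hc1⟩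
      by_cases hc2 : C = pre n (j + 1)
      · exact ⟨j + 1, by omega, by omega, hc2⟩
      exact absurd (step_off hj1 hj2 hn hc1 hc2) hstep

lemma A_zero_zero (hn : 2 ≤ n) (t : ℕ) : A n c t 0 = 0 := by
  unfold A
  by_contra h
  obtain ⟨j, hj1, hjn, heq⟩ := st_support hn t _ h
  have := pre_inj (by omega) hjn heq
  omega

lemma A_init (hn : 2 ≤ n) {k : ℕ} (hk : k ≤ n) :
    A n c 0 k = if k = 1 then 1 else 0 := by
  unfold A
  by_cases h : k = 1
  · subst h; simp [state]
  · rw [show state (w n c) (pre n 1) 0 (pre n k) =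
        (if pre n k = pre n 1 then 1 else 0) from rfl,
      if_neg (fun hh => h (pre_inj hk (by omega) hh)), if_neg h]

lemma st_rec (hn : 2 ≤ n) (t k : ℕ) (hk1 : 1 ≤ k) (hk2 : k ≤ n) :
    A n c (t + 1) k =
      A n c t (k - 1) * stepProb (w n c) (pre n (k - 1)) (pre n k) +
        A n c t k * stepProb (w n c) (pre n k) (pre n k) := by
  have hne : pre n (k - 1) ≠ pre n k := pre_ne (by omega) hk2
  unfold A
  simp only [state]
  rw [← Finset.sum_pair (f := fun B => state (w n c) (pre n 1) t B * stepProb (w n c) B (pre n k)) hne]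
  refine (Finset.sum_subset (Finset.subset_univ _) ?_).symm
  intro B _ hBpair
  by_cases hst : state (w n c) (pre n 1) t B = 0
  · rw [hst, zero_mul]
  obtain ⟨j, hj1, hjn, rfl⟩ := st_support hn t B hst
  by_cases hjtop : j = n
  · by_cases hkn : k = n
    · exfalso
      apply hBpair
      rw [hjtop, hkn]
      exact Finset.mem_insert_of_mem (Finset.mem_singleton_self _)
    · rw [hjtop, pre_univ, step_univ_eval,
        if_neg (by rw [← pre_univ]; exact pre_ne (by omega) le_rfl), mul_zero]
  · have hj2 : j ≤ n - 1 := by omega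
    have hne1 : pre n k ≠ pre n j := by
      intro hkj
      exact hBpair (by
        rw [pre_inj hjn hk2 hkj.symm]
        exact Finset.mem_insert_of_mem (Finset.mem_singleton_self _))
    have hne2 : pre n k ≠ pre n (j + 1) := by
      intro hkj
      have : k = j + 1 := pre_inj hk2 (by omega) hkj
      exact hBpair (by
        rw [show j = k - 1 from by omega]
        exact Finset.mem_insert_self _ _)
    rw [step_off hj1 hj2 hn hne1 hne2, mul_zero]

lemma coe_half : ((2⁻¹ : ℝ≥0) : ℝ≥0∞) = 2⁻¹ := by
  rw [ENNReal.coe_inv (by norm_num), ENNReal.coe_two]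

lemma A_rec_mid (hn : 2 ≤ n) (hc : c ≠ 0) {k : ℕ} (hk1 : 1 ≤ k) (hk2 : k ≤ n - 2) (t : ℕ) :
    A n c (t + 1) k = A n c t (k - 1) * 2⁻¹ + A n c t k * 2⁻¹ := by
  have hn3 : 3 ≤ n := by omega
  have hself : stepProb (w n c) (pre n k) (pre n k) = 2⁻¹ := by
    rw [step_self hk1 (by omega) hn, tp_mid hc hk1 hk2 rfl, coe_half,
      ENNReal.one_sub_inv_two]
  by_cases hk : k = 1
  · subst hk
    rw [st_rec hn t 1 le_rfl (by omega), hself]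
    rw [show (1 : ℕ) - 1 = 0 from rfl, A_zero_zero hn t, zero_mul, zero_mul]
  · have h1 : 1 ≤ k - 1 := by omega
    have hstep : stepProb (w n c) (pre n (k - 1)) (pre n k) = 2⁻¹ := by
      have h := step_next (n := n) (c := c) (k := k - 1) h1 (by omega) hn
      rw [show k - 1 + 1 = k from by omega] at h
      rw [h, tp_mid hc h1 (by omega) rfl, coe_half]
    rw [st_rec hn t k hk1 (by omega), hself, hstep]

lemma A_rec_mid' (hn : 2 ≤ n) (hc : c ≠ 0) {k : ℕ} (hk2 : k + 1 ≤ n - 2) (t : ℕ) :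
    A n c (t + 1) (k + 1) = A n c t k * 2⁻¹ + A n c t (k + 1) * 2⁻¹ := by
  have h := A_rec_mid hn hc (k := k + 1) (by omega) hk2 t
  simpa using h

lemma A_rec_last (hn3 : 3 ≤ n) (hc : c ≠ 0) (t : ℕ) :
    A n c (t + 1) (n - 1) = A n c t (n - 2) * 2⁻¹ := by
  rw [st_rec (by omega) t (n - 1) (by omega) (by omega),
    show n - 1 - 1 = n - 2 from by omega]
  have hstep : stepProb (w n c) (pre n (n - 2)) (pre n (n - 1)) = 2⁻¹ := by
    have h := step_next (n := n) (c := c) (k := n - 2) (by omega) (by omega) (by omega)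
    rw [show n - 2 + 1 = n - 1 from by omega] at h
    rw [h, tp_mid hc (by omega) le_rfl rfl, coe_half]
  have hself : stepProb (w n c) (pre n (n - 1)) (pre n (n - 1)) = 0 := by
    rw [step_self (by omega) le_rfl (by omega), tp_last hc (by omega) rfl,
      ENNReal.coe_one, tsub_self]
  rw [hstep, hself, mul_zero, add_zero]

lemma A_rec_two (hn : n = 2) (hc : c ≠ 0) (t : ℕ) : A n c (t + 1) 1 = 0 := by
  rw [st_rec (by omega) t 1 le_rfl (by omega),
    show (1 : ℕ) - 1 = 0 from rfl, A_zero_zero (by omega) t, zero_mul, zero_add]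
  have hself : stepProb (w n c) (pre n 1) (pre n 1) = 0 := by
    have h := step_self (n := n) (c := c) (k := 1) le_rfl (by omega) (by omega)
    have h2 : turnProb (w n c) (pre n 1) (⟨1, by omega⟩ : Fin n) = 1 := by
      have h3 := tp_last (n := n) (c := c) hc (by omega)
        (x := (⟨1, by omega⟩ : Fin n)) (show (1 : ℕ) = n - 1 from by omega)
      rwa [show n - 1 = 1 from by omega] at h3
    rw [h, h2, ENNReal.coe_one, tsub_self]
  rw [hself, mul_zero]

/-! ### occupation times -/

/-- Expected number of rounds spent with blue prefix of size `k`. -/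
noncomputable def G (n : ℕ) (c : ℝ≥0) (k : ℕ) : ℝ≥0∞ := ∑' t, A n c t k

lemma two_mul_inv_two : (2 : ℝ≥0∞) * 2⁻¹ = 1 :=
  ENNReal.mul_inv_cancel two_ne_zero ENNReal.ofNat_ne_top

lemma G_zero (hn : 2 ≤ n) : G n c 0 = 0 := by
  unfold G
  rw [tsum_congr (fun t => A_zero_zero hn t), tsum_zero]

lemma G_bound (hn : 2 ≤ n) (hc : c ≠ 0) :
    ∀ k, k ≤ n - 2 → ∀ N, ∑ t ∈ Finset.range N, A n c t k ≤ 2 := by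
  intro k
  induction k with
  | zero =>
    intro _ N
    rw [Finset.sum_eq_zero (fun t _ => A_zero_zero hn t)]
    exact zero_le
  | succ k ihk =>
    intro hk N
    induction N with
    | zero => simpa using (zero_le (2 : ℝ≥0∞))
    | succ N ihN =>
      have hrec : ∀ t, A n c (t + 1) (k + 1) = A n c t k * 2⁻¹ + A n c t (k + 1) * 2⁻¹ :=
        fun t => A_rec_mid' hn hc hk t
      have hb1 : (∑ t ∈ Finset.range N, A n c t k) * 2⁻¹ + A n c 0 (k + 1) ≤ 1 := by
        by_cases hk0 : k = 0
        · subst hk0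
          rw [Finset.sum_eq_zero (fun t _ => A_zero_zero hn t), zero_mul, zero_add,
            A_init hn (by omega), if_pos rfl]
        · rw [A_init hn (by omega), if_neg (by omega), add_zero, ← two_mul_inv_two]
          exact mul_le_mul_left (ihk (by omega) N) _
      have hb2 : (∑ t ∈ Finset.range N, A n c t (k + 1)) * 2⁻¹ ≤ 1 := by
        rw [← two_mul_inv_two]
        exact mul_le_mul_left ihN _
      calc ∑ t ∈ Finset.range (N + 1), A n c t (k + 1)
          = ∑ t ∈ Finset.range N, A n c (t + 1) (k + 1) + A n c 0 (k + 1) :=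
            Finset.sum_range_succ' _ _
        _ = ∑ t ∈ Finset.range N, (A n c t k * 2⁻¹ + A n c t (k + 1) * 2⁻¹) +
              A n c 0 (k + 1) := by
            rw [Finset.sum_congr rfl fun t _ => hrec t]
        _ = (∑ t ∈ Finset.range N, A n c t k) * 2⁻¹ +
              (∑ t ∈ Finset.range N, A n c t (k + 1)) * 2⁻¹ + A n c 0 (k + 1) := by
            rw [Finset.sum_add_distrib, Finset.sum_mul, Finset.sum_mul]
        _ = ((∑ t ∈ Finset.range N, A n c t k) * 2⁻¹ + A n c 0 (k + 1)) +
              (∑ t ∈ Finset.range N, A n c t (k + 1)) * 2⁻¹ := by ring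
        _ ≤ 1 + 1 := add_le_add hb1 hb2
        _ = 2 := one_add_one_eq_two

lemma G_le (hn : 2 ≤ n) (hc : c ≠ 0) {k : ℕ} (hk : k ≤ n - 2) : G n c k ≤ 2 := by
  rw [G, ENNReal.tsum_eq_iSup_sum]
  refine iSup_le fun s => ?_
  obtain ⟨N, hN⟩ := Finset.exists_nat_subset_range s
  exact le_trans (Finset.sum_le_sum_of_subset hN) (G_bound hn hc k hk N)

lemma G_ne_top (hn : 2 ≤ n) (hc : c ≠ 0) {k : ℕ} (hk : k ≤ n - 2) : G n c k ≠ ∞ :=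
  fun h => by simpa [h] using G_le hn hc hk

lemma ennreal_solve {x yc : ℝ≥0∞} (hx : x ≠ ∞) (h : x = yc + x * 2⁻¹) :
    x = yc + yc := by
  have hxx : x = x * 2⁻¹ + x * 2⁻¹ := by
    rw [← mul_add, ENNReal.inv_two_add_inv_two, mul_one]
  have key : x * 2⁻¹ + x * 2⁻¹ = yc + x * 2⁻¹ := by rw [← hxx]; exact h
  have hfin : x * 2⁻¹ ≠ ∞ :=
    ENNReal.mul_ne_top hx (by simp)
  have h2 : x * 2⁻¹ = yc := (ENNReal.add_left_inj hfin).1 key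
  rw [hxx, h2]

lemma G_formula (hn : 2 ≤ n) (hc : c ≠ 0) :
    ∀ k, 1 ≤ k → k ≤ n - 2 → G n c k = 2 := by
  intro k
  induction k with
  | zero => omega
  | succ k ih =>
    intro _ hk2
    have hsum : (∑' t, A n c (t + 1) (k + 1)) = G n c k * 2⁻¹ + G n c (k + 1) * 2⁻¹ := by
      rw [tsum_congr (fun t => A_rec_mid' hn hc hk2 t),
        ENNReal.tsum_add, ENNReal.tsum_mul_right, ENNReal.tsum_mul_right]
      rfl
    have hrec : G n c (k + 1) =
        (A n c 0 (k + 1) + G n c k * 2⁻¹) + G n c (k + 1) * 2⁻¹ := by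
      conv_lhs => rw [G, tsum_eq_zero_add' ENNReal.summable]
      rw [hsum, add_assoc]
    have := ennreal_solve (G_ne_top hn hc hk2) hrec
    rw [this]
    by_cases hk0 : k = 0
    · subst hk0
      rw [A_init hn (by omega), if_pos rfl, G_zero hn, zero_mul, add_zero,
        one_add_one_eq_two]
    · rw [A_init hn (by omega), if_neg (by omega), zero_add,
        ih (by omega) (by omega), two_mul_inv_two, one_add_one_eq_two]

lemma G_last (hn3 : 3 ≤ n) (hc : c ≠ 0) : G n c (n - 1) = 1 := by
  conv_lhs => rw [G, tsum_eq_zero_add' ENNReal.summable]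
  rw [tsum_congr (fun t => A_rec_last hn3 hc t), ENNReal.tsum_mul_right]
  rw [A_init (by omega) (by omega), if_neg (by omega),
    show (∑' t, A n c t (n - 2)) = G n c (n - 2) from rfl,
    G_formula (by omega) hc (n - 2) (by omega) le_rfl, two_mul_inv_two, zero_add]

lemma G_one_two (hn2 : n = 2) (hc : c ≠ 0) : G n c 1 = 1 := by
  conv_lhs => rw [G, tsum_eq_zero_add' ENNReal.summable]
  rw [tsum_congr (fun t => A_rec_two hn2 hc t), tsum_zero, add_zero,
    A_init (by omega) (by omega), if_pos rfl]

/-! ### assembling the expected propagation time -/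

lemma inner_sum (hn : 2 ≤ n) (t : ℕ) :
    ∑ C ∈ Finset.univ.filter (fun C : Finset (Fin n) => C ≠ Finset.univ),
        state (w n c) (pre n 1) t C
      = ∑ k ∈ Finset.Ico 1 n, A n c t k := by
  have hinj : ∀ x ∈ Finset.Ico 1 n, ∀ y ∈ Finset.Ico 1 n, pre n x = pre n y → x = y :=
    fun x hx y hy h =>
      pre_inj (le_of_lt (Finset.mem_Ico.1 hx).2) (le_of_lt (Finset.mem_Ico.1 hy).2) h
  rw [show (∑ k ∈ Finset.Ico 1 n, A n c t k) =
      ∑ C ∈ (Finset.Ico 1 n).image (pre n), state (w n c) (pre n 1) t C from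
    (Finset.sum_image hinj).symm]
  refine (Finset.sum_subset ?_ ?_).symm
  · intro C hC
    obtain ⟨k, hk, rfl⟩ := Finset.mem_image.1 hC
    refine Finset.mem_filter.2 ⟨Finset.mem_univ _, ?_⟩
    rw [← pre_univ]
    exact pre_ne (Finset.mem_Ico.1 hk).2 le_rfl
  · intro C hCf hCi
    by_contra h
    obtain ⟨j, hj1, hjn, rfl⟩ := st_support hn t C h
    by_cases hjtop : j = n
    · exact (Finset.mem_filter.1 hCf).2 (by rw [hjtop, pre_univ])
    · exact hCi (Finset.mem_image.2 ⟨j, Finset.mem_Ico.2 ⟨hj1, by omega⟩, rfl⟩)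

lemma ept_left (hn : 2 ≤ n) (hc : c ≠ 0) :
    ept (w n c) (pre n 1) = ((2 * n - 3 : ℕ) : ℝ≥0∞) := by
  unfold ept
  rw [tsum_congr (fun t => inner_sum hn t),
    Summable.tsum_finsetSum (fun k _ => ENNReal.summable)]
  by_cases h2 : n = 2
  · subst h2
    rw [show Finset.Ico 1 2 = {1} from rfl, Finset.sum_singleton,
      show (∑' t, A 2 c t 1) = G 2 c 1 from rfl, G_one_two rfl hc]
    norm_num
  · have hn3 : 3 ≤ n := by omega
    rw [show Finset.Ico 1 n = Finset.Ico 1 ((n - 1) + 1) from by congr 1; omega,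
      Finset.sum_Ico_succ_top (by omega),
      show (∑' t, A n c t (n - 1)) = G n c (n - 1) from rfl, G_last hn3 hc,
      Finset.sum_congr rfl (fun k hk =>
        show (∑' t, A n c t k) = 2 from
          G_formula hn hc k (Finset.mem_Ico.1 hk).1
            (by have := (Finset.mem_Ico.1 hk).2; omega)),
      Finset.sum_const, Nat.card_Ico, nsmul_eq_mul,
      show n - 1 - 1 = n - 2 from by omega,
      show 2 * n - 3 = (n - 2) * 2 + 1 from by omega]
    push_cast
    ring

/-! ### symmetry -/

section Symmetry

variable {V : Type*} [Fintype V] [DecidableEq V] (w' : V → V → ℝ≥0) (e : Equiv.Perm V)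

lemma tp_image (hw : ∀ u v, w' (e u) (e v) = w' u v) (B : Finset V) (x : V) :
    turnProb w' (B.image e) (e x) = turnProb w' B x := by
  unfold turnProb
  have hnum : ∑ u ∈ B.image e, w' u (e x) = ∑ u ∈ B, w' u x := by
    rw [Finset.sum_image (fun a _ b _ h => e.injective h)]
    exact Finset.sum_congr rfl fun u _ => hw u x
  have hden : ∑ u, w' u (e x) = ∑ u, w' u x := by
    rw [← Equiv.sum_comp e (fun u => w' u (e x))]
    exact Finset.sum_congr rfl fun u _ => hw u x
  rw [hnum, hden]

lemma compl_image (s : Finset V) : (s.image e)ᶜ = sᶜ.image e := by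
  ext x
  simp only [Finset.mem_compl, Finset.mem_image]
  constructor
  · intro h
    exact ⟨e.symm x, fun hmem => h ⟨e.symm x, hmem, e.apply_symm_apply x⟩,
      e.apply_symm_apply x⟩
  · rintro ⟨a, ha, rfl⟩ ⟨b, hb, hba⟩
    exact ha (e.injective hba ▸ hb)

lemma step_image (hw : ∀ u v, w' (e u) (e v) = w' u v) (B C : Finset V) :
    stepProb w' (B.image e) (C.image e) = stepProb w' B C := by
  unfold stepProb
  simp only [Finset.image_subset_image_iff e.injective]
  split_ifs with h
  · rw [← Finset.image_sdiff _ _ e.injective, compl_image,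
      Finset.prod_image (fun a _ b _ hab => e.injective hab),
      Finset.prod_image (fun a _ b _ hab => e.injective hab)]
    congr 1
    · exact Finset.prod_congr rfl fun x _ => by rw [tp_image w' e hw]
    · exact Finset.prod_congr rfl fun x _ => by rw [tp_image w' e hw]
  · rfl

lemma state_image (hw : ∀ u v, w' (e u) (e v) = w' u v) (S : Finset V) :
    ∀ (t : ℕ) (C : Finset V),
    state w' (S.image e) t (C.image e) = state w' S t C := by
  intro t
  induction t with
  | zero =>
    intro C
    simp only [state]
    exact if_congr ⟨fun h => Finset.image_injective e.injective h, fun h => by rw [h]⟩ rfl rfl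
  | succ t ih =>
    intro C
    simp only [state]
    refine (Fintype.sum_equiv (Equiv.finsetCongr e)
      (fun B => state w' S t B * stepProb w' B C)
      (fun B => state w' (S.image e) t B * stepProb w' B (C.image e))
      (fun B => ?_)).symm
    rw [Equiv.finsetCongr_apply, Finset.map_eq_image]
    simp only [Equiv.coe_toEmbedding]
    rw [ih B, step_image w' e hw B C]

lemma image_univ_perm : (Finset.univ : Finset V).image e = Finset.univ :=
  Finset.image_univ_equiv e

lemma ept_image (hw : ∀ u v, w' (e u) (e v) = w' u v) (S : Finset V) :
    ept w' (S.image e) = ept w' S := by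
  unfold ept
  refine tsum_congr fun t => ?_
  refine Finset.sum_nbij' (fun C => C.image e.symm) (fun C => C.image e) ?_ ?_ ?_ ?_ ?_
  · intro C hC
    refine Finset.mem_filter.2 ⟨Finset.mem_univ _, fun hC' => ?_⟩
    apply (Finset.mem_filter.1 hC).2
    rw [show C = (C.image e.symm).image e from by
        rw [Finset.image_image]; simp, hC', image_univ_perm]
  · intro C hC
    refine Finset.mem_filter.2 ⟨Finset.mem_univ _, fun hC' => ?_⟩
    apply (Finset.mem_filter.1 hC).2
    rw [show C = (C.image e).image e.symm from by
        rw [Finset.image_image]; simp, hC', image_univ_perm (e := e.symm)]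
  · intro C _
    rw [Finset.image_image]; simp
  · intro C _
    rw [Finset.image_image]; simp
  · intro C _
    rw [← state_image w' e hw S t (C.image e.symm)]
    congr 1
    rw [Finset.image_image]; simp

end Symmetry

end RZFPath

/-- For the bidirectional path on `n ≥ 2` vertices with all
edge weights equal to a positive constant `c`, starting from either endpoint,
the expected propagation time is `2n - 3`. -/
theorem rzf_uniform_path_ept (n : ℕ) (hn : 2 ≤ n) (c : ℝ≥0) (hc : 0 < c) :
    RZF.ept (fun u v : Fin n => if (u : ℕ) + 1 = (v : ℕ) ∨ (v : ℕ) + 1 = (u : ℕ)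
        then c else 0) {(⟨0, by omega⟩ : Fin n)} = ((2 * n - 3 : ℕ) : ℝ≥0∞) ∧
    RZF.ept (fun u v : Fin n => if (u : ℕ) + 1 = (v : ℕ) ∨ (v : ℕ) + 1 = (u : ℕ)
        then c else 0) {(⟨n - 1, by omega⟩ : Fin n)} = ((2 * n - 3 : ℕ) : ℝ≥0∞) := by
  have hc' : c ≠ 0 := hc.ne'
  have h0 : ({(⟨0, by omega⟩ : Fin n)} : Finset (Fin n)) = RZFPath.pre n 1 := by
    ext i
    simp only [Finset.mem_singleton, RZFPath.mem_pre, Fin.ext_iff]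
    omega
  have hrev : ∀ u v : Fin n, RZFPath.w n c (Fin.revPerm u) (Fin.revPerm v) = RZFPath.w n c u v := by
    intro u v
    have hu := u.isLt
    have hv := v.isLt
    unfold RZFPath.w
    refine if_congr ?_ rfl rfl
    simp only [Fin.revPerm_apply, Fin.val_rev]
    omega
  constructor
  · show RZF.ept (RZFPath.w n c) {(⟨0, by omega⟩ : Fin n)} = ((2 * n - 3 : ℕ) : ℝ≥0∞)
    rw [h0]
    exact RZFPath.ept_left hn hc'
  · show RZF.ept (RZFPath.w n c) {(⟨n - 1, by omega⟩ : Fin n)} = ((2 * n - 3 : ℕ) : ℝ≥0∞)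
    have him : ({(⟨n - 1, by omega⟩ : Fin n)} : Finset (Fin n)) =
        ({(⟨0, by omega⟩ : Fin n)} : Finset (Fin n)).image Fin.revPerm := by
      have hrv : Fin.revPerm (⟨0, by omega⟩ : Fin n) = (⟨n - 1, by omega⟩ : Fin n) := by
        ext
        simp [Fin.val_rev]
      rw [Finset.image_singleton, hrv]
    rw [him, RZFPath.ept_image (RZFPath.w n c) Fin.revPerm hrev, h0]
    exact RZFPath.ept_left hn hc'
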